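/- There exists a constant C > 0 such that the following holds. Consider the process Boot3(t) on Q_{2,n} with base threshold ⌈N/2⌉ (where N = n + C(n,2)) and t = 10n, where each vertex is initially infected independently with probability p = 1/2 − C·√(log n)/n. Then P(A_3 = A_2) → 1 as n → ∞. -/

import Mathlib

open Finset Filter
open scoped Classical symmDiff

noncomputable section

/-- The infected set after `i` steps of `r`-neighbour bootstrap percolation on the graph `G`,
starting from the initial infected set `A0`:
`A_{i+1} = A_i ∪ {v : |N(v) ∩ A_i| ≥ r}`. -/
def bootSets {V : Type*} [Fintype V] [DecidableEq V] (G : SimpleGraph V) (r : ℕ)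
    (A0 : Finset V) : ℕ → Finset V
  | 0 => A0
  | i + 1 =>
      bootSets G r A0 i ∪
        Finset.univ.filter fun v => r ≤ (G.neighborFinset v ∩ bootSets G r A0 i).card

/-- `A0` percolates under the `r`-neighbour bootstrap process on `G`. -/
def percolates {V : Type*} [Fintype V] [DecidableEq V] (G : SimpleGraph V) (r : ℕ)
    (A0 : Finset V) : Prop :=
  ∃ i, bootSets G r A0 i = Finset.univ

/-- The probability that the initial infected set is exactly `A`, when every vertex is
infected independently with probability `p`. -/
def configProb {V : Type*} [Fintype V] [DecidableEq V] (p : ℝ) (A : Finset V) : ℝ :=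
  p ^ A.card * (1 - p) ^ (Fintype.card V - A.card)

/-- The probability of the event `E` about the initial infected set, when every vertex is
infected independently with probability `p`. -/
def probEvent {V : Type*} [Fintype V] [DecidableEq V] (p : ℝ) (E : Finset V → Prop) : ℝ :=
  ∑ A : Finset V, if E A then configProb p A else 0

/-- The generalized hypercube `Q_{k,n}`: vertices are `{0,1}^n`, two vertices being adjacent
iff their Hamming distance is between `1` and `k`.  The usual hypercube `Q_n` is
`cubeGraph n 1`. -/
def cubeGraph (n k : ℕ) : SimpleGraph (Fin n → Bool) where
  Adj x y := 1 ≤ hammingDist x y ∧ hammingDist x y ≤ k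
  symm := by
    constructor
    intro x y h
    rwa [hammingDist_comm]
  loopless := by
    constructor
    intro x h
    simp [hammingDist_self] at h

/-- The critical probability for `r`-neighbour bootstrap percolation on `Q_{k,n}` where every
vertex is initially infected independently with probability `p`:
the supremum of all `p ∈ (0,1)` for which percolation has probability at most `1/2`. -/
def critProb (n k r : ℕ) : ℝ :=
  sSup {p : ℝ | p ∈ Set.Ioo (0 : ℝ) 1 ∧
    probEvent p (fun A0 => percolates (cubeGraph n k) r A0) ≤ 1 / 2}

/-- The `Boot1(t)` process with base threshold `r`: at step `1` the threshold is `r - t`,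
afterwards it is `r`. -/
def boot1Sets {V : Type*} [Fintype V] [DecidableEq V] (G : SimpleGraph V) (r t : ℕ)
    (A0 : Finset V) : ℕ → Finset V
  | 0 => A0
  | 1 => A0 ∪ Finset.univ.filter fun v => r - t ≤ (G.neighborFinset v ∩ A0).card
  | i + 2 =>
      boot1Sets G r t A0 (i + 1) ∪
        Finset.univ.filter fun v =>
          r ≤ (G.neighborFinset v ∩ boot1Sets G r t A0 (i + 1)).card

/-- The `Boot2(t)` (= `Boot3(t)`) process with base threshold `r`: at step `1` the threshold
is `r - 2t`, at step `2` it is `r - t`, and afterwards it is `r`. -/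
def boot2Sets {V : Type*} [Fintype V] [DecidableEq V] (G : SimpleGraph V) (r t : ℕ)
    (A0 : Finset V) : ℕ → Finset V
  | 0 => A0
  | 1 => A0 ∪ Finset.univ.filter fun v => r - 2 * t ≤ (G.neighborFinset v ∩ A0).card
  | 2 =>
      boot2Sets G r t A0 1 ∪
        Finset.univ.filter fun v =>
          r - t ≤ (G.neighborFinset v ∩ boot2Sets G r t A0 1).card
  | i + 3 =>
      boot2Sets G r t A0 (i + 2) ∪
        Finset.univ.filter fun v =>
          r ≤ (G.neighborFinset v ∩ boot2Sets G r t A0 (i + 2)).card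

section Aux
variable {V : Type*} [Fintype V] [DecidableEq V]

lemma weight_eq_prod (p : ℝ) (f : V → ℝ) (A : Finset V) :
    (∏ u ∈ A, f u) * configProb p A
      = (∏ u ∈ A, (f u * p)) * ∏ u ∈ Finset.univ \ A, (1 - p) := by
  rw [configProb, prod_const, card_sdiff_of_subset (subset_univ A), card_univ, Finset.prod_mul_distrib,
    prod_const]
  ring

lemma sum_weight (p : ℝ) (f : V → ℝ) :
    ∑ A : Finset V, (∏ u ∈ A, f u) * configProb p A = ∏ u : V, (f u * p + (1 - p)) := by
  rw [Finset.prod_add, ← Finset.powerset_univ, Finset.sum_congr rfl]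
  intro A hA
  exact weight_eq_prod p f A

lemma sum_configProb (p : ℝ) : ∑ A : Finset V, configProb p A = 1 := by
  have h := sum_weight p (fun _ : V => (1:ℝ))
  simpa using h

lemma configProb_nonneg {p : ℝ} (h0 : 0 ≤ p) (h1 : p ≤ 1) (A : Finset V) :
    0 ≤ configProb p A := by
  apply mul_nonneg (pow_nonneg h0 _) (pow_nonneg (by linarith) _)

lemma probEvent_nonneg {p : ℝ} (h0 : 0 ≤ p) (h1 : p ≤ 1) (E : Finset V → Prop) :
    0 ≤ probEvent p E := by
  apply Finset.sum_nonneg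
  intro A _
  by_cases h : E A <;> simp [h, configProb_nonneg h0 h1]

lemma probEvent_add_compl (p : ℝ) (E : Finset V → Prop) :
    probEvent p E + probEvent p (fun A => ¬ E A) = 1 := by
  rw [probEvent, probEvent, ← Finset.sum_add_distrib]
  rw [show (1:ℝ) = ∑ A : Finset V, configProb p A from (sum_configProb p).symm]
  apply Finset.sum_congr rfl
  intro A _
  by_cases h : E A <;> simp [h]

lemma probEvent_le_sum {ι : Type*} {p : ℝ} (h0 : 0 ≤ p) (h1 : p ≤ 1) (s : Finset ι)
    (E : ι → Finset V → Prop) (F : Finset V → Prop)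
    (h : ∀ A, F A → ∃ i ∈ s, E i A) :
    probEvent p F ≤ ∑ i ∈ s, probEvent p (E i) := by
  simp only [probEvent]
  rw [Finset.sum_comm]
  apply Finset.sum_le_sum
  intro A _
  by_cases hF : F A
  · obtain ⟨i, hi, hEi⟩ := h A hF
    have := Finset.single_le_sum (f := fun i => if E i A then configProb p A else 0)
      (fun j _ => by by_cases hj : E j A <;> simp [hj, configProb_nonneg h0 h1]) hi
    simpa [hF, hEi] using this
  · simp only [hF, if_false]
    exact Finset.sum_nonneg fun j _ => by
      by_cases hj : E j A <;> simp [hj, configProb_nonneg h0 h1]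

lemma probEvent_mono {p : ℝ} (h0 : 0 ≤ p) (h1 : p ≤ 1) {E F : Finset V → Prop}
    (h : ∀ A, E A → F A) : probEvent p E ≤ probEvent p F := by
  apply Finset.sum_le_sum
  intro A _
  by_cases hE : E A
  · simp [hE, h A hE]
  · by_cases hF : F A <;> simp [hE, hF, configProb_nonneg h0 h1]

lemma chernoff_core {p : ℝ} (h0 : 0 ≤ p) (h1 : p ≤ 1) (c : V → ℝ) (l b : ℝ) (hl : 0 ≤ l) :
    probEvent p (fun A => b ≤ ∑ u ∈ A, c u)
      ≤ Real.exp (-(l * b)) * ∏ u : V, (1 - p + p * Real.exp (l * c u)) := by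
  have key : ∀ A : Finset V,
      (if b ≤ ∑ u ∈ A, c u then configProb p A else 0)
        ≤ Real.exp (-(l * b)) * ((∏ u ∈ A, Real.exp (l * c u)) * configProb p A) := by
    intro A
    have hcp := configProb_nonneg h0 h1 A
    have hprod : (∏ u ∈ A, Real.exp (l * c u)) = Real.exp (l * ∑ u ∈ A, c u) := by
      rw [Finset.mul_sum, Real.exp_sum]
    by_cases h : b ≤ ∑ u ∈ A, c u
    · rw [if_pos h, hprod, show Real.exp (-(l*b)) * (Real.exp (l * ∑ u ∈ A, c u) * configProb p A)
          = Real.exp (-(l*b) + l * ∑ u ∈ A, c u) * configProb p A by rw [Real.exp_add]; ring]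
      have : (1:ℝ) ≤ Real.exp (-(l * b) + l * ∑ u ∈ A, c u) := by
        rw [← Real.exp_zero]
        apply Real.exp_le_exp.2
        nlinarith
      nlinarith
    · rw [if_neg h]
      positivity
  calc probEvent p (fun A => b ≤ ∑ u ∈ A, c u)
      ≤ ∑ A : Finset V, Real.exp (-(l * b)) * ((∏ u ∈ A, Real.exp (l * c u)) * configProb p A) :=
        Finset.sum_le_sum fun A _ => key A
    _ = Real.exp (-(l * b)) * ∑ A : Finset V, (∏ u ∈ A, Real.exp (l * c u)) * configProb p A := by
        rw [Finset.mul_sum]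
    _ = Real.exp (-(l * b)) * ∏ u : V, (Real.exp (l * c u) * p + (1 - p)) := by
        rw [sum_weight]
    _ = Real.exp (-(l * b)) * ∏ u : V, (1 - p + p * Real.exp (l * c u)) := by
        congr 1; apply Finset.prod_congr rfl; intro u _; ring

lemma concentration {p : ℝ} (h0 : 0 ≤ p) (h1 : p ≤ 1) (c : V → ℝ) (hc : ∀ u, 0 ≤ c u)
    {a B D : ℝ} (hB : ∑ u : V, (c u) ^ 2 ≤ B) (hBpos : 0 < B) (hD : 0 < D)
    (ha : p * (∑ u : V, c u) + D ≤ a) :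
    probEvent p (fun A : Finset V => a ≤ ∑ u ∈ A, c u) ≤ Real.exp (-(D ^ 2 / (8 * B))) := by
  set K : ℝ := 4 * B / D with hK
  have hKpos : 0 < K := by positivity
  set l : ℝ := D / (4 * B) with hl
  have hlpos : 0 < l := by positivity
  set c' : V → ℝ := fun u => if c u ≤ K then c u else 0 with hc'
  have hc'le : ∀ u, c' u ≤ c u := fun u => by
    by_cases h : c u ≤ K <;> simp [c', h, hc u]
  have hc'nonneg : ∀ u, 0 ≤ c' u := fun u => by
    by_cases h : c u ≤ K <;> simp [c', h, hc u]
  have hc'K : ∀ u, c' u ≤ K := fun u => by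
    by_cases h : c u ≤ K <;> simp [c', h, le_of_lt hKpos]
  have heavy : ∀ A : Finset V, ∑ u ∈ A, c u - ∑ u ∈ A, c' u ≤ D / 4 := by
    intro A
    have h1' : ∑ u ∈ A, c u - ∑ u ∈ A, c' u = ∑ u ∈ A, (c u - c' u) := by
      rw [Finset.sum_sub_distrib]
    rw [h1']
    have h2' : ∀ u, c u - c' u ≤ (c u) ^ 2 / K := by
      intro u
      by_cases h : c u ≤ K
      · simp only [c', if_pos h, sub_self]
        positivity
      · simp only [c', if_neg h, sub_zero]
        rw [le_div_iff₀ hKpos]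
        nlinarith [hc u, not_le.1 h]
    calc ∑ u ∈ A, (c u - c' u) ≤ ∑ u ∈ A, (c u) ^ 2 / K :=
          Finset.sum_le_sum fun u _ => h2' u
      _ ≤ ∑ u : V, (c u) ^ 2 / K := by
          apply Finset.sum_le_sum_of_subset_of_nonneg (Finset.subset_univ A)
          intro u _ _
          positivity
      _ = (∑ u : V, (c u) ^ 2) / K := by rw [Finset.sum_div]
      _ ≤ B / K := by gcongr
      _ = D / 4 := by rw [hK]; field_simp
  have factor : ∀ u : V, 1 - p + p * Real.exp (l * c' u) ≤ Real.exp (p * (l * c' u + (l * c' u) ^ 2)) := by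
    intro u
    set x : ℝ := l * c' u with hx
    have hx0 : 0 ≤ x := mul_nonneg hlpos.le (hc'nonneg u)
    have hx1 : x ≤ 1 := by
      rw [hx, hl]
      calc D / (4 * B) * c' u ≤ D / (4 * B) * K := by
            apply mul_le_mul_of_nonneg_left (hc'K u) (by positivity)
        _ = 1 := by rw [hK]; field_simp
    have hexp : Real.exp x ≤ 1 + x + x ^ 2 := by
      have := Real.abs_exp_sub_one_sub_id_le (x := x) (by rw [abs_of_nonneg hx0]; exact hx1)
      have h2 := (abs_le.1 this).2
      linarith
    calc 1 - p + p * Real.exp x ≤ 1 - p + p * (1 + x + x ^ 2) := by nlinarith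
      _ = 1 + p * (x + x ^ 2) := by ring
      _ ≤ Real.exp (p * (x + x ^ 2)) := by
          have := Real.add_one_le_exp (p * (x + x ^ 2))
          linarith
  have sum_c'_le : ∑ u : V, c' u ≤ ∑ u : V, c u := Finset.sum_le_sum fun u _ => hc'le u
  have sum_c'2_le : ∑ u : V, (c' u) ^ 2 ≤ B := by
    refine le_trans (Finset.sum_le_sum fun u _ => ?_) hB
    have := hc'le u; have := hc'nonneg u; nlinarith
  have sum_c_nonneg : 0 ≤ ∑ u : V, c u := Finset.sum_nonneg fun u _ => hc u
  calc probEvent p (fun A : Finset V => a ≤ ∑ u ∈ A, c u)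
      ≤ probEvent p (fun A : Finset V => a - D / 4 ≤ ∑ u ∈ A, c' u) := by
        apply probEvent_mono h0 h1
        intro A hA
        have := heavy A
        linarith
    _ ≤ Real.exp (-(l * (a - D / 4))) * ∏ u : V, (1 - p + p * Real.exp (l * c' u)) :=
        chernoff_core h0 h1 c' l (a - D / 4) hlpos.le
    _ ≤ Real.exp (-(l * (a - D / 4))) * ∏ u : V, Real.exp (p * (l * c' u + (l * c' u) ^ 2)) := by
        apply mul_le_mul_of_nonneg_left _ (Real.exp_nonneg _)
        apply Finset.prod_le_prod
        · intro u _
          have := Real.exp_nonneg (l * c' u)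
          nlinarith
        · intro u _; exact factor u
    _ = Real.exp (-(l * (a - D / 4)) + ∑ u : V, p * (l * c' u + (l * c' u) ^ 2)) := by
        rw [← Real.exp_sum, ← Real.exp_add]
    _ ≤ Real.exp (-(D ^ 2 / (8 * B))) := by
        apply Real.exp_le_exp.2
        have hsum : ∑ u : V, p * (l * c' u + (l * c' u) ^ 2)
            = p * l * (∑ u : V, c' u) + p * l ^ 2 * (∑ u : V, (c' u) ^ 2) := by
          rw [Finset.mul_sum, Finset.mul_sum, ← Finset.sum_add_distrib]
          apply Finset.sum_congr rfl
          intro u _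
          ring
        rw [hsum]
        have h1' : p * l * (∑ u : V, c' u) ≤ p * l * (∑ u : V, c u) := by
          apply mul_le_mul_of_nonneg_left sum_c'_le (by positivity)
        have h2' : p * l ^ 2 * (∑ u : V, (c' u) ^ 2) ≤ l ^ 2 * B := by
          calc p * l ^ 2 * (∑ u : V, (c' u) ^ 2) ≤ 1 * l ^ 2 * (∑ u : V, (c' u) ^ 2) := by
                apply mul_le_mul_of_nonneg_right _ _
                · apply mul_le_mul_of_nonneg_right h1 (by positivity)
                · exact Finset.sum_nonneg fun u _ => by positivity
            _ = l ^ 2 * (∑ u : V, (c' u) ^ 2) := by ring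
            _ ≤ l ^ 2 * B := by apply mul_le_mul_of_nonneg_left sum_c'2_le (by positivity)
        have hla : -(l * (a - D / 4)) ≤ -(l * (p * (∑ u : V, c u) + D - D / 4)) := by
          have : l * (p * (∑ u : V, c u) + D - D / 4) ≤ l * (a - D / 4) := by
            apply mul_le_mul_of_nonneg_left (by linarith) hlpos.le
          linarith
        have hlB : l ^ 2 * B = D ^ 2 / (16 * B) := by
          rw [hl]; field_simp; ring
        have hlD : l * D = D ^ 2 / (4 * B) := by rw [hl]; field_simp
        have expand : -(l * (p * (∑ u : V, c u) + D - D / 4)) + p * l * (∑ u : V, c u) + l ^ 2 * B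
            = -(3 / 4) * (D ^ 2 / (4 * B)) + D ^ 2 / (16 * B) := by
          rw [hlB]
          have : l * (p * (∑ u : V, c u) + D - D / 4)
              = p * l * (∑ u : V, c u) + (3 / 4) * (l * D) := by ring
          rw [this, hlD]
          ring
        have final : -(3 / 4) * (D ^ 2 / (4 * B)) + D ^ 2 / (16 * B) = -(D ^ 2 / (8 * B)) := by
          field_simp
          ring
        linarith [expand, final, hla, h1', h2']

lemma structure_of_ne (G : SimpleGraph V) (r t : ℕ) (A0 : Finset V)
    (hne : boot2Sets G r t A0 3 ≠ boot2Sets G r t A0 2) :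
    ∃ d : V, ∃ S : Finset V, S ⊆ G.neighborFinset d ∧ S.card = t ∧
      ∀ w ∈ S, r - 2 * t ≤ (G.neighborFinset w ∩ A0).card := by
  set A1 := boot2Sets G r t A0 1 with hA1
  set A2 := boot2Sets G r t A0 2 with hA2
  have h3 : boot2Sets G r t A0 3
      = A2 ∪ Finset.univ.filter fun v => r ≤ (G.neighborFinset v ∩ A2).card := by
    rw [hA2]; (conv_lhs => rw [boot2Sets])
  have h2 : A2 = A1 ∪ Finset.univ.filter fun v =>
      r - t ≤ (G.neighborFinset v ∩ A1).card := by
    rw [hA1, hA2]; (conv_lhs => rw [boot2Sets])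
  have h1 : A1 = A0 ∪ Finset.univ.filter fun v =>
      r - 2 * t ≤ (G.neighborFinset v ∩ A0).card := by
    rw [hA1]; (conv_lhs => rw [boot2Sets])
  have hv : ∃ v, v ∉ A2 ∧ r ≤ (G.neighborFinset v ∩ A2).card := by
    by_contra hcon
    push_neg at hcon
    apply hne
    rw [h3]
    apply Finset.union_eq_left.2
    intro v hvmem
    simp only [Finset.mem_filter, Finset.mem_univ, true_and] at hvmem
    by_contra hv2
    exact absurd hvmem (not_le.2 (hcon v hv2))
  obtain ⟨v, hvA2, hvcard⟩ := hv
  have hA2ne : ∃ d, d ∉ A1 ∧ r - t ≤ (G.neighborFinset d ∩ A1).card := by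
    by_cases heq : A2 = A1
    · exfalso
      apply hvA2
      rw [h2]
      apply Finset.mem_union_right
      simp only [Finset.mem_filter, Finset.mem_univ, true_and]
      rw [← heq]
      exact le_trans (Nat.sub_le r t) hvcard
    · have : ¬ (Finset.univ.filter fun w =>
          r - t ≤ (G.neighborFinset w ∩ A1).card) ⊆ A1 := by
        intro hsub
        exact heq (by rw [h2]; exact Finset.union_eq_left.2 hsub)
      obtain ⟨d, hd1, hd2⟩ := Finset.not_subset.1 this
      simp only [Finset.mem_filter, Finset.mem_univ, true_and] at hd1
      exact ⟨d, hd2, hd1⟩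
  obtain ⟨d, hdA1, hdcard⟩ := hA2ne
  have hdA0 : d ∉ A0 ∧ (G.neighborFinset d ∩ A0).card < r - 2 * t := by
    rw [h1] at hdA1
    simp only [Finset.mem_union, Finset.mem_filter, Finset.mem_univ, true_and, not_or,
      not_le] at hdA1
    exact hdA1
  have hr2t : 1 ≤ r - 2 * t := Nat.one_le_iff_ne_zero.2 (by
    intro h0
    rw [h0] at hdA0
    exact Nat.not_lt_zero _ hdA0.2)
  have hsubA : A0 ⊆ A1 := by rw [h1]; exact Finset.subset_union_left
  have hcards : t ≤ (G.neighborFinset d ∩ (A1 \ A0)).card := by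
    have hseteq : G.neighborFinset d ∩ (A1 \ A0)
        = (G.neighborFinset d ∩ A1) \ (G.neighborFinset d ∩ A0) := by
      ext u
      simp only [Finset.mem_inter, Finset.mem_sdiff]
      tauto
    rw [hseteq, Finset.card_sdiff_of_subset (Finset.inter_subset_inter_left hsubA)]
    have h2t : r - t = (r - 2 * t) + t := by omega
    omega
  obtain ⟨S, hS1, hS2⟩ := Finset.exists_subset_card_eq hcards
  refine ⟨d, S, ?_, hS2, ?_⟩
  · exact hS1.trans (Finset.inter_subset_left)
  · intro w hw
    have hw' := hS1 hw
    simp only [Finset.mem_inter, Finset.mem_sdiff] at hw'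
    obtain ⟨-, hwA1, hwA0⟩ := hw'
    rw [h1] at hwA1
    rcases Finset.mem_union.1 hwA1 with h | h
    · exact absurd h hwA0
    · simpa using h

lemma nbr_inter_eq_filter (G : SimpleGraph V) (w : V) (A : Finset V) :
    G.neighborFinset w ∩ A = A.filter (fun u => G.Adj w u) := by
  ext u
  simp [SimpleGraph.mem_neighborFinset, and_comm]

lemma card_nbr_inter (G : SimpleGraph V) (w : V) (A : Finset V) :
    (G.neighborFinset w ∩ A).card = ∑ u ∈ A, if G.Adj w u then 1 else 0 := by
  rw [nbr_inter_eq_filter, Finset.card_filter]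

lemma double_count (G : SimpleGraph V) (S A : Finset V) :
    ∑ w ∈ S, (G.neighborFinset w ∩ A).card = ∑ u ∈ A, (S ∩ G.neighborFinset u).card := by
  have h2 : ∀ u, (S ∩ G.neighborFinset u).card = ∑ w ∈ S, if G.Adj w u then 1 else 0 := by
    intro u
    rw [Finset.inter_comm, nbr_inter_eq_filter, Finset.card_filter]
    apply Finset.sum_congr rfl
    intro w _
    rw [G.adj_comm]
  simp only [card_nbr_inter, h2]
  rw [Finset.sum_comm]

lemma sum_sq_count (G : SimpleGraph V) (S : Finset V) :
    ∑ u : V, ((S ∩ G.neighborFinset u).card) ^ 2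
      = ∑ w ∈ S, ∑ w' ∈ S, (G.neighborFinset w ∩ G.neighborFinset w').card := by
  have h2 : ∀ u, (S ∩ G.neighborFinset u).card = ∑ w ∈ S, if G.Adj w u then 1 else 0 := by
    intro u
    rw [Finset.inter_comm, nbr_inter_eq_filter, Finset.card_filter]
    apply Finset.sum_congr rfl
    intro w _
    rw [G.adj_comm]
  have h3 : ∀ u : V, ((S ∩ G.neighborFinset u).card) ^ 2
      = ∑ w ∈ S, ∑ w' ∈ S, ((if G.Adj w u then 1 else 0) * (if G.Adj w' u then 1 else 0)) := by
    intro u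
    rw [h2, sq, Finset.sum_mul_sum]
  simp only [h3]
  rw [Finset.sum_comm]
  apply Finset.sum_congr rfl
  intro w _
  rw [Finset.sum_comm]
  apply Finset.sum_congr rfl
  intro w' _
  have h4 : G.neighborFinset w ∩ G.neighborFinset w'
      = Finset.univ.filter (fun u => G.Adj w u ∧ G.Adj w' u) := by
    ext u
    simp [SimpleGraph.mem_neighborFinset]
  rw [h4, Finset.card_filter]
  apply Finset.sum_congr rfl
  intro u _
  by_cases ha : G.Adj w u <;> by_cases hb : G.Adj w' u <;> simp [ha, hb]

end Aux

section Cube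
variable {n : ℕ}

def dSet (x y : Fin n → Bool) : Finset (Fin n) := Finset.univ.filter fun i => x i ≠ y i

lemma card_dSet (x y : Fin n → Bool) : (dSet x y).card = hammingDist x y := by
  rw [hammingDist, dSet]

lemma mem_dSet {x y : Fin n → Bool} {i : Fin n} : i ∈ dSet x y ↔ x i ≠ y i := by
  simp [dSet]

lemma dSet_inj {w u u' : Fin n → Bool} (h : dSet u w = dSet u' w) : u = u' := by
  funext i
  have hi : (u i ≠ w i) ↔ (u' i ≠ w i) := by
    constructor <;> intro hh
    · exact mem_dSet.1 (h ▸ mem_dSet.2 hh)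
    · exact mem_dSet.1 (h ▸ mem_dSet.2 hh)
  revert hi
  cases u i <;> cases u' i <;> cases w i <;> simp

lemma mem_cube_nbhd {w u : Fin n → Bool} :
    u ∈ (cubeGraph n 2).neighborFinset w ↔ 1 ≤ hammingDist w u ∧ hammingDist w u ≤ 2 := by
  rw [SimpleGraph.mem_neighborFinset]
  rfl

lemma cube_degree_le (w : Fin n → Bool) :
    ((cubeGraph n 2).neighborFinset w).card ≤ n + n.choose 2 := by
  classical
  have hinj : Set.InjOn (fun u => dSet u w) ((cubeGraph n 2).neighborFinset w : Set _) := by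
    intro u _ u' _ h
    exact dSet_inj h
  have hmaps : ∀ u ∈ (cubeGraph n 2).neighborFinset w,
      dSet u w ∈ (Finset.univ.powersetCard 1 ∪ Finset.univ.powersetCard 2 :
        Finset (Finset (Fin n))) := by
    intro u hu
    rw [mem_cube_nbhd] at hu
    have hcard : (dSet u w).card = hammingDist u w := card_dSet u w
    rw [hammingDist_comm] at hcard
    simp only [Finset.mem_union, Finset.mem_powersetCard]
    have h1 := hu.1
    have h2 := hu.2
    rcases Nat.lt_or_ge (hammingDist w u) 2 with h | h
    · left
      exact ⟨Finset.subset_univ _, by omega⟩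
    · right
      exact ⟨Finset.subset_univ _, by omega⟩
  calc ((cubeGraph n 2).neighborFinset w).card
      ≤ (Finset.univ.powersetCard 1 ∪ Finset.univ.powersetCard 2 :
          Finset (Finset (Fin n))).card :=
        Finset.card_le_card_of_injOn _ hmaps hinj
    _ ≤ (Finset.univ.powersetCard 1 : Finset (Finset (Fin n))).card
        + (Finset.univ.powersetCard 2 : Finset (Finset (Fin n))).card :=
        Finset.card_union_le _ _
    _ = n + n.choose 2 := by
        rw [Finset.card_powersetCard, Finset.card_powersetCard, Finset.card_univ,
          Fintype.card_fin, Nat.choose_one_right]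

lemma cube_overlap {w w' : Fin n → Bool} (hne : w ≠ w') :
    (((cubeGraph n 2).neighborFinset w) ∩ ((cubeGraph n 2).neighborFinset w')).card
      ≤ 16 * (n + 1) := by
  classical
  rcases Finset.eq_empty_or_nonempty
      (((cubeGraph n 2).neighborFinset w) ∩ ((cubeGraph n 2).neighborFinset w')) with he | hne'
  · rw [he]; simp
  set M : Finset (Fin n) := dSet w w' with hM
  have hMne : M.Nonempty := by
    have : hammingDist w w' ≠ 0 := fun h => hne (hammingDist_eq_zero.1 h)
    rw [← Finset.card_pos, card_dSet]
    omega
  have boolkey : ∀ a b c : Bool, (a ≠ b) ↔ ((c ≠ a) ∧ ¬(c ≠ b) ∨ (c ≠ b) ∧ ¬(c ≠ a)) := by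
    decide
  have hsymm : ∀ u : Fin n → Bool, M = (dSet u w) ∆ (dSet u w') := by
    intro u
    ext i
    simp only [Finset.mem_symmDiff, mem_dSet, hM]
    exact boolkey (w i) (w' i) (u i)
  have hM4 : ∀ u ∈ ((cubeGraph n 2).neighborFinset w) ∩ ((cubeGraph n 2).neighborFinset w'),
      M.card ≤ 4 := by
    intro u hu
    rw [Finset.mem_inter, mem_cube_nbhd, mem_cube_nbhd] at hu
    have h1 : (dSet u w).card ≤ 2 := by rw [card_dSet, hammingDist_comm]; exact hu.1.2
    have h2 : (dSet u w').card ≤ 2 := by rw [card_dSet, hammingDist_comm]; exact hu.2.2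
    calc M.card = ((dSet u w) ∆ (dSet u w')).card := by rw [hsymm u]
      _ ≤ ((dSet u w) ∪ (dSet u w')).card := Finset.card_le_card symmDiff_le_sup
      _ ≤ (dSet u w).card + (dSet u w').card := Finset.card_union_le _ _
      _ ≤ 4 := by omega
  obtain ⟨u₀, hu₀⟩ := hne'
  have hM4' : M.card ≤ 4 := hM4 u₀ hu₀
  set Ys : Finset (Finset (Fin n)) :=
    insert ∅ (Finset.univ.image fun i => ({i} : Finset (Fin n))) with hYs
  have hmaps : ∀ u ∈ ((cubeGraph n 2).neighborFinset w) ∩ ((cubeGraph n 2).neighborFinset w'),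
      (M \ dSet u w, dSet u w \ M) ∈ M.powerset ×ˢ Ys := by
    intro u hu
    rw [Finset.mem_inter, mem_cube_nbhd, mem_cube_nbhd] at hu
    rw [Finset.mem_product, Finset.mem_powerset]
    refine ⟨Finset.sdiff_subset, ?_⟩
    have hP : (dSet u w).card ≤ 2 := by rw [card_dSet, hammingDist_comm]; exact hu.1.2
    have hQ : (dSet u w').card ≤ 2 := by rw [card_dSet, hammingDist_comm]; exact hu.2.2
    have hY1 : (dSet u w \ M).card ≤ 1 := by
      by_contra hY
      push_neg at hY
      have hYsub : dSet u w \ M ⊆ dSet u w := Finset.sdiff_subset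
      have hYeq : dSet u w \ M = dSet u w := by
        apply Finset.eq_of_subset_of_card_le hYsub
        have := Finset.card_le_card hYsub
        omega
      have hdisj : Disjoint (dSet u w) M :=
        Finset.sdiff_eq_self_iff_disjoint.1 hYeq
      have hQeq : dSet u w' = (dSet u w) ∆ M := by
        have h5 := hsymm u
        rw [h5, ← symmDiff_assoc, symmDiff_self, bot_symmDiff]
      have hcardsum : (dSet u w').card = (dSet u w).card + M.card := by
        rw [hQeq, hdisj.symmDiff_eq_sup]
        exact Finset.card_union_of_disjoint hdisj
      have hMc : 1 ≤ M.card := Finset.card_pos.2 hMne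
      have hY' : (dSet u w).card = (dSet u w \ M).card := by rw [hYeq]
      omega
    rcases Nat.le_one_iff_eq_zero_or_eq_one.1 hY1 with h | h
    · rw [Finset.card_eq_zero.1 h, hYs]; exact Finset.mem_insert_self _ _
    · obtain ⟨i, hi⟩ := Finset.card_eq_one.1 h
      rw [hi, hYs]
      exact Finset.mem_insert_of_mem (Finset.mem_image.2 ⟨i, Finset.mem_univ i, rfl⟩)
  have hinj : Set.InjOn (fun u => (M \ dSet u w, dSet u w \ M))
      (((((cubeGraph n 2).neighborFinset w) ∩ ((cubeGraph n 2).neighborFinset w') : Finset _)) :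
        Set (Fin n → Bool)) := by
    intro u _ u' _ h
    simp only [Prod.mk.injEq] at h
    apply dSet_inj (w := w)
    ext i
    by_cases hiM : i ∈ M
    · have h1 := congrArg (fun s => i ∈ s) h.1
      simp only [Finset.mem_sdiff, eq_iff_iff] at h1
      constructor <;> intro hh
      · by_contra hh'
        exact (h1.2 ⟨hiM, hh'⟩).2 hh
      · by_contra hh'
        exact (h1.1 ⟨hiM, hh'⟩).2 hh
    · have h2 := congrArg (fun s => i ∈ s) h.2
      simp only [Finset.mem_sdiff, eq_iff_iff] at h2
      constructor <;> intro hh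
      · exact (h2.1 ⟨hh, hiM⟩).1
      · exact (h2.2 ⟨hh, hiM⟩).1
  calc (((cubeGraph n 2).neighborFinset w) ∩ ((cubeGraph n 2).neighborFinset w')).card
      ≤ (M.powerset ×ˢ Ys).card := Finset.card_le_card_of_injOn _ hmaps hinj
    _ = 2 ^ M.card * Ys.card := by rw [Finset.card_product, Finset.card_powerset]
    _ ≤ 16 * (n + 1) := by
        have h1 : Ys.card ≤ n + 1 := by
          calc Ys.card ≤ (Finset.univ.image fun i => ({i} : Finset (Fin n))).card + 1 :=
                Finset.card_insert_le _ _
            _ ≤ n + 1 := by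
                have := Finset.card_image_le (s := (Finset.univ : Finset (Fin n)))
                  (f := fun i => ({i} : Finset (Fin n)))
                simp only [Finset.card_univ, Fintype.card_fin] at this
                omega
        have h2 : 2 ^ M.card ≤ 16 := by
          calc 2 ^ M.card ≤ 2 ^ 4 := Nat.pow_le_pow_right (by norm_num) hM4'
            _ = 16 := by norm_num
        exact Nat.mul_le_mul h2 h1

end Cube

section Main

set_option maxHeartbeats 1600000 in
lemma core_bound {n : ℕ} (h100 : 100 ≤ n)
    (heps : 10000 * Real.sqrt (Real.log n) / n ≤ 1 / 4) :
    probEvent (1 / 2 - 10000 * Real.sqrt (Real.log (n : ℝ)) / (n : ℝ))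
      (fun A0 : Finset (Fin n → Bool) =>
        ¬ (boot2Sets (cubeGraph n 2) ⌈((n + n.choose 2 : ℕ) : ℝ) / 2⌉₊ (10 * n) A0 3 =
           boot2Sets (cubeGraph n 2) ⌈((n + n.choose 2 : ℕ) : ℝ) / 2⌉₊ (10 * n) A0 2))
      ≤ Real.exp (-(n : ℝ)) := by
  classical
  set G := cubeGraph n 2 with hG
  set N : ℕ := n + n.choose 2 with hN
  set r : ℕ := ⌈((N : ℕ) : ℝ) / 2⌉₊ with hr
  set t : ℕ := 10 * n with ht
  set ε : ℝ := 10000 * Real.sqrt (Real.log n) / n with hεdef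
  set p : ℝ := 1 / 2 - ε with hp
  -- basic numeric facts
  have hnR : (100 : ℝ) ≤ (n : ℝ) := by exact_mod_cast h100
  have hn0 : (0 : ℝ) < n := by linarith
  have hlog1 : 1 ≤ Real.log n := by
    rw [Real.le_log_iff_exp_le hn0]
    calc Real.exp 1 ≤ 2.7182818286 := Real.exp_one_lt_d9.le
      _ ≤ (n : ℝ) := by linarith
  have hsq1 : 1 ≤ Real.sqrt (Real.log n) := by
    rw [show (1:ℝ) = Real.sqrt 1 by rw [Real.sqrt_one]]
    exact Real.sqrt_le_sqrt hlog1
  have hε0 : 0 ≤ ε := by positivity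
  have hp0 : 0 ≤ p := by rw [hp]; linarith
  have hp1 : p ≤ 1 := by rw [hp]; linarith
  have hNR : (N : ℝ) = n + n * (n - 1) / 2 := by
    rw [hN]
    push_cast [Nat.cast_choose_two]
    ring
  have hN1 : (n : ℝ) ^ 2 / 4 ≤ (N : ℝ) := by rw [hNR]; nlinarith
  have hN2 : (N : ℝ) ≤ (n : ℝ) ^ 2 := by rw [hNR]; nlinarith
  have hrN : ((N : ℕ) : ℝ) / 2 ≤ (r : ℝ) := by rw [hr]; exact Nat.le_ceil _
  have h2tr : 2 * t ≤ r := by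
    have : ((2 * t : ℕ) : ℝ) ≤ (r : ℝ) := by
      push_cast [ht]
      nlinarith
    exact_mod_cast this
  have hrt_cast : ((r - 2 * t : ℕ) : ℝ) = (r : ℝ) - 20 * n := by
    rw [Nat.cast_sub h2tr]
    push_cast [ht]
    ring
  set D : ℝ := 10000 * (n : ℝ) ^ 2 * Real.sqrt (Real.log n) with hD
  set B : ℝ := 4000 * (n : ℝ) ^ 3 with hB
  have hDpos : 0 < D := by rw [hD]; positivity
  have hBpos : 0 < B := by rw [hB]; positivity
  set T : ℝ := Real.exp (-(D ^ 2 / (8 * B))) with hT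
  -- the per-S bound
  have perS : ∀ S : Finset (Fin n → Bool), S.card = t →
      probEvent p (fun A0 : Finset (Fin n → Bool) =>
        ∀ w ∈ S, r - 2 * t ≤ (G.neighborFinset w ∩ A0).card) ≤ T := by
    intro S hScard
    set c : (Fin n → Bool) → ℝ := fun u => ((S ∩ G.neighborFinset u).card : ℝ) with hc
    have hcnn : ∀ u, 0 ≤ c u := fun u => by positivity
    set a : ℝ := ((t * (r - 2 * t) : ℕ) : ℝ) with ha
    -- event implication
    have himp : ∀ A : Finset (Fin n → Bool),
        (∀ w ∈ S, r - 2 * t ≤ (G.neighborFinset w ∩ A).card) → a ≤ ∑ u ∈ A, c u := by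
      intro A hA
      have hnat : t * (r - 2 * t) ≤ ∑ u ∈ A, (S ∩ G.neighborFinset u).card := by
        rw [← double_count]
        calc t * (r - 2 * t) = ∑ _w ∈ S, (r - 2 * t) := by
              rw [Finset.sum_const, hScard, smul_eq_mul]
          _ ≤ ∑ w ∈ S, (G.neighborFinset w ∩ A).card := Finset.sum_le_sum hA
      rw [ha, hc]
      calc ((t * (r - 2 * t) : ℕ) : ℝ)
          ≤ ((∑ u ∈ A, (S ∩ G.neighborFinset u).card : ℕ) : ℝ) := by exact_mod_cast hnat
        _ = ∑ u ∈ A, ((S ∩ G.neighborFinset u).card : ℝ) := by push_cast; rfl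
    -- second moment bound
    have hsumsq : ∑ u : Fin n → Bool, (c u) ^ 2 ≤ B := by
      have hnatbd : ∑ w ∈ S, ∑ w' ∈ S, (G.neighborFinset w ∩ G.neighborFinset w').card
          ≤ t * (N + t * (16 * (n + 1))) := by
        calc ∑ w ∈ S, ∑ w' ∈ S, (G.neighborFinset w ∩ G.neighborFinset w').card
            ≤ ∑ w ∈ S, (N + t * (16 * (n + 1))) := by
              apply Finset.sum_le_sum
              intro w hw
              rw [← Finset.add_sum_erase S _ hw]
              apply Nat.add_le_add
              · rw [Finset.inter_self]
                exact cube_degree_le w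
              · calc ∑ w' ∈ S.erase w, (G.neighborFinset w ∩ G.neighborFinset w').card
                    ≤ ∑ w' ∈ S.erase w, 16 * (n + 1) := by
                      apply Finset.sum_le_sum
                      intro w' hw'
                      exact cube_overlap (Finset.ne_of_mem_erase hw').symm
                  _ = (S.erase w).card * (16 * (n + 1)) := by
                      rw [Finset.sum_const, smul_eq_mul]
                  _ ≤ t * (16 * (n + 1)) := by
                      apply Nat.mul_le_mul_right
                      calc (S.erase w).card ≤ S.card := Finset.card_erase_le
                        _ = t := hScard
          _ = t * (N + t * (16 * (n + 1))) := by
              rw [Finset.sum_const, hScard, smul_eq_mul]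
      have hcast : ∑ u : Fin n → Bool, (c u) ^ 2
          = ((∑ w ∈ S, ∑ w' ∈ S, (G.neighborFinset w ∩ G.neighborFinset w').card : ℕ) : ℝ) := by
        rw [← sum_sq_count]
        push_cast
        rfl
      rw [hcast]
      calc ((∑ w ∈ S, ∑ w' ∈ S, (G.neighborFinset w ∩ G.neighborFinset w').card : ℕ) : ℝ)
          ≤ ((t * (N + t * (16 * (n + 1))) : ℕ) : ℝ) := by exact_mod_cast hnatbd
        _ = 10 * n * (N + 10 * n * (16 * (n + 1))) := by push_cast [ht]; ring
        _ ≤ B := by rw [hB]; nlinarith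
    -- expectation bound
    have hmean : p * (∑ u : Fin n → Bool, c u) + D ≤ a := by
      have hsumc : ∑ u : Fin n → Bool, c u ≤ 10 * n * N := by
        have hnat2 : ∑ u : Fin n → Bool, (S ∩ G.neighborFinset u).card ≤ t * N := by
          rw [show (Finset.univ : Finset (Fin n → Bool)) = Finset.univ from rfl]
          rw [← double_count G S Finset.univ]
          calc ∑ w ∈ S, (G.neighborFinset w ∩ Finset.univ).card
              ≤ ∑ w ∈ S, N := by
                apply Finset.sum_le_sum
                intro w _
                rw [Finset.inter_univ]
                exact cube_degree_le w
            _ = t * N := by rw [Finset.sum_const, hScard, smul_eq_mul]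
        have : ∑ u : Fin n → Bool, c u
            = ((∑ u : Fin n → Bool, (S ∩ G.neighborFinset u).card : ℕ) : ℝ) := by
          push_cast; rfl
        rw [this]
        calc ((∑ u : Fin n → Bool, (S ∩ G.neighborFinset u).card : ℕ) : ℝ)
            ≤ ((t * N : ℕ) : ℝ) := by exact_mod_cast hnat2
          _ = 10 * n * N := by push_cast [ht]; ring
      have hc0 : 0 ≤ ∑ u : Fin n → Bool, c u := Finset.sum_nonneg fun u _ => hcnn u
      have hstep1 : p * (∑ u : Fin n → Bool, c u) ≤ p * (10 * n * N) :=
        mul_le_mul_of_nonneg_left hsumc hp0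
      have hstep2 : p * (10 * (n:ℝ) * N) = 5 * (n:ℝ) * N - ε * (10 * (n:ℝ) * N) := by
        rw [hp]; ring
      have hstep1' : p * (∑ u : Fin n → Bool, c u) ≤ p * (10 * (n:ℝ) * N) := hstep1
      have hstep3 : 25000 * (n : ℝ) ^ 2 * Real.sqrt (Real.log n) ≤ ε * (10 * (n:ℝ) * N) := by
        have hεN : ε * (10 * (n:ℝ) * N) = 100000 * Real.sqrt (Real.log n) * (N:ℝ) := by
          rw [hεdef]
          field_simp
          ring
        rw [hεN]
        calc 25000 * (n : ℝ) ^ 2 * Real.sqrt (Real.log n)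
            = 100000 * Real.sqrt (Real.log n) * ((n:ℝ)^2/4) := by ring
          _ ≤ 100000 * Real.sqrt (Real.log n) * (N:ℝ) :=
              mul_le_mul_of_nonneg_left hN1 (by positivity)
      have hstep4 : a = 10 * (n:ℝ) * (r : ℝ) - 200 * (n : ℝ) ^ 2 := by
        rw [ha]
        rw [Nat.cast_mul, hrt_cast]
        push_cast [ht]
        ring
      have hstep5 : 5 * (n : ℝ) * N ≤ 10 * (n:ℝ) * (r : ℝ) := by nlinarith
      have hstep6 : 200 * (n:ℝ)^2 ≤ 15000 * (n:ℝ)^2 * Real.sqrt (Real.log n) := by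
        nlinarith [mul_le_mul_of_nonneg_left hsq1 (show (0:ℝ) ≤ 15000*(n:ℝ)^2 by positivity)]
      have hstep7 : D = 10000 * (n : ℝ) ^ 2 * Real.sqrt (Real.log n) := hD
      rw [hstep4]
      linarith [hstep1', hstep2, hstep3, hstep5, hstep6, hstep7]
    have := concentration hp0 hp1 c hcnn hsumsq hBpos hDpos hmean
    calc probEvent p (fun A0 : Finset (Fin n → Bool) =>
          ∀ w ∈ S, r - 2 * t ≤ (G.neighborFinset w ∩ A0).card)
        ≤ probEvent p (fun A : Finset (Fin n → Bool) => a ≤ ∑ u ∈ A, c u) :=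
          probEvent_mono hp0 hp1 himp
      _ ≤ T := this
  -- union bound
  have hTnn : 0 ≤ T := Real.exp_nonneg _
  have step1 : probEvent p
      (fun A0 : Finset (Fin n → Bool) =>
        ¬ (boot2Sets G r t A0 3 = boot2Sets G r t A0 2))
      ≤ ∑ d : Fin n → Bool, probEvent p (fun A0 =>
          ∃ S ∈ (G.neighborFinset d).powersetCard t,
            ∀ w ∈ S, r - 2 * t ≤ (G.neighborFinset w ∩ A0).card) := by
    apply probEvent_le_sum hp0 hp1
    intro A0 hA0
    obtain ⟨d, S, hSsub, hScard, hSthr⟩ := structure_of_ne G r t A0 hA0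
    exact ⟨d, Finset.mem_univ d, S, Finset.mem_powersetCard.2 ⟨hSsub, hScard⟩, hSthr⟩
  have step2 : ∀ d : Fin n → Bool, probEvent p (fun A0 =>
      ∃ S ∈ (G.neighborFinset d).powersetCard t,
        ∀ w ∈ S, r - 2 * t ≤ (G.neighborFinset w ∩ A0).card)
      ≤ ((n : ℝ) ^ (20 * n)) * T := by
    intro d
    calc probEvent p (fun A0 =>
        ∃ S ∈ (G.neighborFinset d).powersetCard t,
          ∀ w ∈ S, r - 2 * t ≤ (G.neighborFinset w ∩ A0).card)
        ≤ ∑ S ∈ (G.neighborFinset d).powersetCard t,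
            probEvent p (fun A0 => ∀ w ∈ S, r - 2 * t ≤ (G.neighborFinset w ∩ A0).card) :=
          probEvent_le_sum hp0 hp1 _ _ _ (fun A0 h => h)
      _ ≤ ∑ S ∈ (G.neighborFinset d).powersetCard t, T := by
          apply Finset.sum_le_sum
          intro S hS
          exact perS S (Finset.mem_powersetCard.1 hS).2
      _ = (((G.neighborFinset d).powersetCard t).card : ℝ) * T := by
          rw [Finset.sum_const, nsmul_eq_mul]
      _ ≤ ((n : ℝ) ^ (20 * n)) * T := by
          apply mul_le_mul_of_nonneg_right _ hTnn
          rw [Finset.card_powersetCard]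
          calc ((((G.neighborFinset d).card).choose t : ℕ) : ℝ)
              ≤ ((N.choose t : ℕ) : ℝ) := by
                exact_mod_cast Nat.choose_le_choose t (cube_degree_le d)
            _ ≤ ((N : ℝ) ^ t) / (t.factorial : ℝ) := Nat.choose_le_pow_div t N
            _ ≤ (N : ℝ) ^ t := by
                apply div_le_self (by positivity)
                exact_mod_cast Nat.one_le_iff_ne_zero.2 (Nat.factorial_ne_zero t)
            _ ≤ ((n : ℝ) ^ 2) ^ t := by
                apply pow_le_pow_left₀ (by positivity) hN2
            _ = (n : ℝ) ^ (20 * n) := by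
                rw [← pow_mul, ht]
                ring_nf
  have step3 : probEvent p
      (fun A0 : Finset (Fin n → Bool) =>
        ¬ (boot2Sets G r t A0 3 = boot2Sets G r t A0 2))
      ≤ (2 : ℝ) ^ n * (((n : ℝ) ^ (20 * n)) * T) := by
    calc probEvent p (fun A0 : Finset (Fin n → Bool) =>
          ¬ (boot2Sets G r t A0 3 = boot2Sets G r t A0 2))
        ≤ ∑ d : Fin n → Bool, probEvent p (fun A0 =>
            ∃ S ∈ (G.neighborFinset d).powersetCard t,
              ∀ w ∈ S, r - 2 * t ≤ (G.neighborFinset w ∩ A0).card) := step1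
      _ ≤ ∑ _d : Fin n → Bool, ((n : ℝ) ^ (20 * n)) * T :=
          Finset.sum_le_sum fun d _ => step2 d
      _ = (Fintype.card (Fin n → Bool) : ℝ) * (((n : ℝ) ^ (20 * n)) * T) := by
          rw [Finset.sum_const, Finset.card_univ, nsmul_eq_mul]
      _ = (2 : ℝ) ^ n * (((n : ℝ) ^ (20 * n)) * T) := by
          rw [Fintype.card_fun, Fintype.card_bool, Fintype.card_fin]
          push_cast
          ring
  -- final numeric bound
  have final : (2 : ℝ) ^ n * (((n : ℝ) ^ (20 * n)) * T) ≤ Real.exp (-(n : ℝ)) := by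
    have hne0 : (n:ℝ) ≠ 0 := hn0.ne'
    have hDB : D ^ 2 / (8 * B) = 3125 * n * Real.log n := by
      rw [hD, hB]
      have hsq : (Real.sqrt (Real.log n)) ^ 2 = Real.log n :=
        Real.sq_sqrt (by linarith)
      have hexp2 : (10000 * (n:ℝ)^2 * Real.sqrt (Real.log n))^2
          = 100000000 * (n:ℝ)^4 * ((Real.sqrt (Real.log n))^2) := by ring
      rw [hexp2, hsq]
      field_simp
      ring
    have h2exp : (2 : ℝ) ^ n = Real.exp (n * Real.log 2) := by
      rw [Real.exp_nat_mul, Real.exp_log (by norm_num : (0:ℝ) < 2)]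
    have hnexp : (n : ℝ) ^ (20 * n) = Real.exp ((20 * n : ℕ) * Real.log n) := by
      rw [Real.exp_nat_mul, Real.exp_log hn0]
    rw [h2exp, hnexp, hT, hDB, ← Real.exp_add, ← Real.exp_add]
    apply Real.exp_le_exp.2
    have hlog2 : Real.log 2 ≤ 1 := by
      have := Real.log_le_sub_one_of_pos (show (0:ℝ) < 2 by norm_num)
      linarith
    have hc20 : ((20 * n : ℕ) : ℝ) = 20 * (n : ℝ) := by push_cast; ring
    rw [hc20]
    have ha1 : (n:ℝ) * Real.log 2 ≤ (n:ℝ) * 1 :=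
      mul_le_mul_of_nonneg_left hlog2 hn0.le
    have ha2 : (n:ℝ) * 1 ≤ (n:ℝ) * Real.log n :=
      mul_le_mul_of_nonneg_left hlog1 hn0.le
    nlinarith [ha1, ha2]
  exact le_trans step3 final


lemma eps_tendsto : Tendsto (fun n : ℕ => 10000 * Real.sqrt (Real.log n) / n) atTop (nhds 0) := by
  have hsqrt : Tendsto Real.sqrt atTop atTop := by
    apply (tendsto_rpow_atTop (show (0:ℝ) < 1/2 by norm_num)).congr
    intro x
    exact (Real.sqrt_eq_rpow x).symm
  have hg : Tendsto (fun n : ℕ => 10000 / Real.sqrt (n : ℝ)) atTop (nhds 0) :=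
    Tendsto.div_atTop tendsto_const_nhds (hsqrt.comp tendsto_natCast_atTop_atTop)
  apply squeeze_zero' ?_ ?_ hg
  · apply Eventually.of_forall
    intro n
    positivity
  · filter_upwards [eventually_ge_atTop 1] with n hn
    have hn0 : (0:ℝ) < n := by exact_mod_cast hn
    have hsqn0 : (0:ℝ) < Real.sqrt n := Real.sqrt_pos.2 hn0
    have hlogn : Real.log n ≤ (n:ℝ) := by
      have := Real.log_le_sub_one_of_pos hn0
      linarith
    have h1 : Real.sqrt (Real.log n) ≤ Real.sqrt n := Real.sqrt_le_sqrt hlogn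
    rw [div_le_div_iff₀ hn0 hsqn0]
    have h2 : Real.sqrt n * Real.sqrt n = (n:ℝ) := Real.mul_self_sqrt hn0.le
    nlinarith [Real.sqrt_nonneg (Real.log n), Real.sqrt_nonneg (n:ℝ)]


end Main

/-- There is a constant `C > 0` such that in the process `Boot3(t)`
(implemented by `boot2Sets`, which has the same update rule) on `Q_{2,n}` with base threshold
`⌈N/2⌉` (where `N = n + C(n,2)`), `t = 10n` and initial infection probability
`p = 1/2 - C√(log n)/n`, we have `P(A_3 = A_2) → 1` as `n → ∞`. -/
theorem boot3_stabilizes_Q2n :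
    ∃ C : ℝ, 0 < C ∧
      Filter.Tendsto
        (fun n : ℕ =>
          probEvent (1 / 2 - C * Real.sqrt (Real.log (n : ℝ)) / (n : ℝ))
            (fun A0 : Finset (Fin n → Bool) =>
              boot2Sets (cubeGraph n 2) ⌈((n + n.choose 2 : ℕ) : ℝ) / 2⌉₊ (10 * n) A0 3 =
                boot2Sets (cubeGraph n 2) ⌈((n + n.choose 2 : ℕ) : ℝ) / 2⌉₊ (10 * n) A0 2))
        Filter.atTop (nhds 1) := by
  refine ⟨10000, by norm_num, ?_⟩
  have heq : ∀ n : ℕ,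
      probEvent (1 / 2 - 10000 * Real.sqrt (Real.log (n : ℝ)) / (n : ℝ))
        (fun A0 : Finset (Fin n → Bool) =>
          boot2Sets (cubeGraph n 2) ⌈((n + n.choose 2 : ℕ) : ℝ) / 2⌉₊ (10 * n) A0 3 =
            boot2Sets (cubeGraph n 2) ⌈((n + n.choose 2 : ℕ) : ℝ) / 2⌉₊ (10 * n) A0 2)
      = 1 - probEvent (1 / 2 - 10000 * Real.sqrt (Real.log (n : ℝ)) / (n : ℝ))
        (fun A0 : Finset (Fin n → Bool) =>
          ¬ (boot2Sets (cubeGraph n 2) ⌈((n + n.choose 2 : ℕ) : ℝ) / 2⌉₊ (10 * n) A0 3 =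
            boot2Sets (cubeGraph n 2) ⌈((n + n.choose 2 : ℕ) : ℝ) / 2⌉₊ (10 * n) A0 2)) := by
    intro n
    have := probEvent_add_compl (1 / 2 - 10000 * Real.sqrt (Real.log (n : ℝ)) / (n : ℝ))
      (fun A0 : Finset (Fin n → Bool) =>
        boot2Sets (cubeGraph n 2) ⌈((n + n.choose 2 : ℕ) : ℝ) / 2⌉₊ (10 * n) A0 3 =
          boot2Sets (cubeGraph n 2) ⌈((n + n.choose 2 : ℕ) : ℝ) / 2⌉₊ (10 * n) A0 2)
    linarith
  have hεev : ∀ᶠ n : ℕ in atTop, 10000 * Real.sqrt (Real.log n) / n ≤ 1 / 4 := by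
    have := eps_tendsto.eventually (gt_mem_nhds (show (0:ℝ) < 1/4 by norm_num))
    filter_upwards [this] with n hn
    exact le_of_lt hn
  have hq : Tendsto (fun n : ℕ =>
      probEvent (1 / 2 - 10000 * Real.sqrt (Real.log (n : ℝ)) / (n : ℝ))
        (fun A0 : Finset (Fin n → Bool) =>
          ¬ (boot2Sets (cubeGraph n 2) ⌈((n + n.choose 2 : ℕ) : ℝ) / 2⌉₊ (10 * n) A0 3 =
            boot2Sets (cubeGraph n 2) ⌈((n + n.choose 2 : ℕ) : ℝ) / 2⌉₊ (10 * n) A0 2)))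
      atTop (nhds 0) := by
    apply squeeze_zero' ?_ ?_
      (Real.tendsto_exp_neg_atTop_nhds_zero.comp tendsto_natCast_atTop_atTop)
    · filter_upwards [hεev, eventually_ge_atTop 1] with n hn hn1
      have hn0 : (0:ℝ) < n := by exact_mod_cast hn1
      have hε0 : 0 ≤ 10000 * Real.sqrt (Real.log n) / n := by positivity
      exact probEvent_nonneg (by linarith) (by linarith) _
    · filter_upwards [hεev, eventually_ge_atTop 100] with n hn hn100
      exact core_bound hn100 hn
  rw [funext heq]
  have := Filter.Tendsto.sub (tendsto_const_nhds (x := (1:ℝ)) (f := atTop)) hq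
  simpa using this


end
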